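/- (Laplace-type asymptotics of the scale integral, equation (4.17).) For every b > 0 and every l > 0 one has lim_{ε→0⁺} [ ∫_{1/b}^{1/b + lε} exp( (1/ε²)·(1/(3x³) − b/(2x²)) ) dx ] / [ ε·e^{−b³/(6ε²)}·∫_0^l e^{(b⁵/2)x²} dx ] = 1. -/
import Mathlib


open MeasureTheory Real Set Filter
open scoped Topology

set_option maxHeartbeats 1000000 in
lemma statement10_key (b l : ℝ) (hb : 0 < b) (hl : 0 < l) :
    Tendsto
      (fun ε : ℝ => ∫ u in (0 : ℝ)..l,
        Real.exp (b ^ 5 * u ^ 2 * (3 + b * ε * u) / (6 * (1 + b * ε * u) ^ 3)))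
      (𝓝[>] (0 : ℝ)) (𝓝 (∫ x in (0 : ℝ)..l, Real.exp (b ^ 5 / 2 * x ^ 2))) := by
  apply intervalIntegral.tendsto_integral_filter_of_dominated_convergence
    (bound := fun u => Real.exp (b ^ 5 / 2 * u ^ 2))
  · filter_upwards with ε
    have hm : Measurable fun u : ℝ =>
        b ^ 5 * u ^ 2 * (3 + b * ε * u) / (6 * (1 + b * ε * u) ^ 3) :=
      Measurable.div (by fun_prop) (by fun_prop)
    exact (Real.measurable_exp.comp hm).aestronglyMeasurable
  · filter_upwards [self_mem_nhdsWithin] with ε (hε : 0 < ε)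
    filter_upwards with u hu
    rw [Set.uIoc_of_le hl.le] at hu
    have hu0 : 0 < u := hu.1
    have hs : 0 ≤ b * ε * u := by positivity
    have hc : 0 ≤ b ^ 5 * u ^ 2 := by positivity
    rw [Real.norm_eq_abs, abs_of_pos (Real.exp_pos _), Real.exp_le_exp,
      div_le_iff₀ (by positivity)]
    nlinarith [mul_nonneg hc hs, mul_nonneg hc (mul_nonneg hs hs),
      mul_nonneg hc (mul_nonneg hs (mul_nonneg hs hs))]
  · exact (Real.continuous_exp.comp (by continuity)).intervalIntegrable 0 l
  · filter_upwards with u _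
    have h1 : Tendsto (fun ε : ℝ => b * ε * u) (𝓝[>] (0 : ℝ)) (𝓝 0) := by
      have h : Tendsto (fun ε : ℝ => b * ε * u) (𝓝 (0 : ℝ)) (𝓝 (b * 0 * u)) :=
        (Continuous.tendsto (by continuity) 0)
      simpa using h.mono_left nhdsWithin_le_nhds
    have h2 : Tendsto (fun s : ℝ => Real.exp (b ^ 5 * u ^ 2 * (3 + s) / (6 * (1 + s) ^ 3)))
        (𝓝 (0 : ℝ)) (𝓝 (Real.exp (b ^ 5 / 2 * u ^ 2))) := by
      have hcont : ContinuousAt (fun s : ℝ => b ^ 5 * u ^ 2 * (3 + s) / (6 * (1 + s) ^ 3)) 0 :=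
        ContinuousAt.div (by fun_prop) (by fun_prop) (by norm_num)
      have h3 := (Real.continuous_exp.continuousAt.comp hcont).tendsto
      simp only [Function.comp] at h3
      convert h3 using 2
      norm_num
      ring
    exact h2.comp h1

/-- (Laplace-type asymptotics of the scale integral, equation (4.17).) For every `b > 0` and
`l > 0`:
`lim_{ε→0⁺} [∫_{1/b}^{1/b+lε} exp((1/ε²)(1/(3x³) − b/(2x²))) dx] /
  [ε·e^{−b³/(6ε²)}·∫_0^l e^{(b⁵/2)x²} dx] = 1`. -/
theorem statement10 (b l : ℝ) (hb : 0 < b) (hl : 0 < l) :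
    Tendsto
      (fun ε : ℝ =>
        (∫ x in (1 / b)..(1 / b + l * ε),
            Real.exp (1 / ε ^ 2 * (1 / (3 * x ^ 3) - b / (2 * x ^ 2)))) /
          (ε * Real.exp (-b ^ 3 / (6 * ε ^ 2)) *
            ∫ x in (0 : ℝ)..l, Real.exp (b ^ 5 / 2 * x ^ 2)))
      (𝓝[>] (0 : ℝ)) (𝓝 1) := by
  have hIpos : 0 < ∫ x in (0 : ℝ)..l, Real.exp (b ^ 5 / 2 * x ^ 2) := by
    apply intervalIntegral.intervalIntegral_pos_of_pos_on
    · exact (Real.continuous_exp.comp (by continuity)).intervalIntegrable 0 l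
    · intro x _; exact Real.exp_pos _
    · exact hl
  have key := statement10_key b l hb hl
  have hmain : Tendsto
      (fun ε : ℝ => (∫ u in (0 : ℝ)..l,
          Real.exp (b ^ 5 * u ^ 2 * (3 + b * ε * u) / (6 * (1 + b * ε * u) ^ 3))) /
        ∫ x in (0 : ℝ)..l, Real.exp (b ^ 5 / 2 * x ^ 2)) (𝓝[>] (0 : ℝ)) (𝓝 1) := by
    have h := key.div_const (∫ x in (0 : ℝ)..l, Real.exp (b ^ 5 / 2 * x ^ 2))
    rwa [div_self hIpos.ne'] at h
  apply hmain.congr'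
  filter_upwards [self_mem_nhdsWithin] with ε (hε : 0 < ε)
  have hsub : (∫ x in (1 / b)..(1 / b + l * ε),
      Real.exp (1 / ε ^ 2 * (1 / (3 * x ^ 3) - b / (2 * x ^ 2))))
      = ε * ∫ u in (0 : ℝ)..l,
          Real.exp (1 / ε ^ 2 * (1 / (3 * (1 / b + ε * u) ^ 3) - b / (2 * (1 / b + ε * u) ^ 2))) := by
    have h := intervalIntegral.smul_integral_comp_add_mul
      (f := fun x => Real.exp (1 / ε ^ 2 * (1 / (3 * x ^ 3) - b / (2 * x ^ 2))))
      (a := (0:ℝ)) (b := l) ε (1 / b)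
    rw [smul_eq_mul] at h
    simp only [mul_zero, add_zero] at h
    rw [mul_comm l ε]
    exact h.symm
  have hcongr : (∫ u in (0 : ℝ)..l,
      Real.exp (1 / ε ^ 2 * (1 / (3 * (1 / b + ε * u) ^ 3) - b / (2 * (1 / b + ε * u) ^ 2))))
      = Real.exp (-b ^ 3 / (6 * ε ^ 2)) * ∫ u in (0 : ℝ)..l,
          Real.exp (b ^ 5 * u ^ 2 * (3 + b * ε * u) / (6 * (1 + b * ε * u) ^ 3)) := by
    rw [← intervalIntegral.integral_const_mul]
    apply intervalIntegral.integral_congr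
    intro u hu
    rw [Set.uIcc_of_le hl.le] at hu
    have hu0 : 0 ≤ u := hu.1
    have hx : (0:ℝ) < 1 / b + ε * u := by positivity
    have hd : (0:ℝ) < 1 + b * ε * u := by positivity
    simp only [← Real.exp_add]
    congr 1
    field_simp
    ring
  rw [hsub, hcongr]
  have hne : ε * Real.exp (-b ^ 3 / (6 * ε ^ 2)) ≠ 0 :=
    mul_ne_zero hε.ne' (Real.exp_pos _).ne'
  rw [show ε * (Real.exp (-b ^ 3 / (6 * ε ^ 2)) * ∫ u in (0:ℝ)..l,
        Real.exp (b ^ 5 * u ^ 2 * (3 + b * ε * u) / (6 * (1 + b * ε * u) ^ 3)))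
      = (ε * Real.exp (-b ^ 3 / (6 * ε ^ 2))) * ∫ u in (0:ℝ)..l,
        Real.exp (b ^ 5 * u ^ 2 * (3 + b * ε * u) / (6 * (1 + b * ε * u) ^ 3)) by ring,
    mul_div_mul_left _ _ hne]
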